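/- arXiv:0903.1379 — 2 statements merged into one kernel-verified Lean document; each statement's English description precedes it below -/
import Mathlib

section
/- For SNR > 0, the expectation E[log₂(1 + SNR·|H|²)], where |H|² is exponentially distributed with mean 1, equals log₂(e)·e^{1/SNR}·E₁(1/SNR), where E₁(ζ) = ∫₁^∞ t^{-1} e^{-ζt} dt is the exponential integral of order 1. -/
open MeasureTheory

/-- Exponential integral of order 1: `E₁ ζ = ∫₁^∞ t⁻¹ e^{-ζ t} dt`. -/
noncomputable def expInt (ζ : ℝ) : ℝ := ∫ t in Set.Ioi (1 : ℝ), t⁻¹ * Real.exp (-ζ * t)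

open Set Real Filter

lemma shift_Ioi (f : ℝ → ℝ) : ∫ t in Ioi (1:ℝ), f t = ∫ x in Ioi (0:ℝ), f (x + 1) := by
  have h := (measurePreserving_add_right (volume : Measure ℝ) 1).setIntegral_image_emb
    (measurableEmbedding_addRight 1) f (Ioi (0:ℝ))
  have himg : (fun x : ℝ => x + 1) '' Ioi 0 = Ioi 1 := by
    rw [Set.image_add_const_Ioi]; norm_num
  rw [← himg]
  exact h

lemma integrable_log_exp {S : ℝ} (hS : 0 < S) :
    IntegrableOn (fun x => Real.log (1 + S * x) * Real.exp (-x)) (Ioi (0:ℝ)) := by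
  have hgamma : IntegrableOn (fun x : ℝ => Real.exp (-x) * x ^ ((2:ℝ) - 1)) (Ioi 0) :=
    Real.GammaIntegral_convergent (by norm_num)
  have hint : IntegrableOn (fun x : ℝ => S * (Real.exp (-x) * x ^ ((2:ℝ) - 1))) (Ioi 0) :=
    hgamma.const_mul S
  refine hint.mono' ?_ ?_
  · exact ((Real.measurable_log.comp (by fun_prop)).mul (by fun_prop)).aestronglyMeasurable
  · filter_upwards [ae_restrict_mem measurableSet_Ioi] with x hx
    have hx0 : (0:ℝ) < x := hx
    have h1 : (0:ℝ) ≤ Real.log (1 + S * x) := by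
      apply Real.log_nonneg; nlinarith
    have h2 : Real.log (1 + S * x) ≤ S * x := by
      have := Real.log_le_sub_one_of_pos (show (0:ℝ) < 1 + S * x by nlinarith)
      linarith
    rw [Real.norm_eq_abs, abs_of_nonneg (mul_nonneg h1 (Real.exp_pos _).le)]
    rw [show (2:ℝ) - 1 = 1 by norm_num, Real.rpow_one]
    have : Real.log (1 + S * x) * Real.exp (-x) ≤ S * x * Real.exp (-x) :=
      mul_le_mul_of_nonneg_right h2 (Real.exp_pos _).le
    nlinarith [Real.exp_pos (-x)]

lemma integrable_rat_exp {S : ℝ} (hS : 0 < S) :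
    IntegrableOn (fun x => S * ((1 + S * x)⁻¹ * Real.exp (-x))) (Ioi (0:ℝ)) := by
  have hexp : IntegrableOn (fun x : ℝ => S * Real.exp (-(1:ℝ) * x)) (Ioi 0) :=
    (exp_neg_integrableOn_Ioi 0 one_pos).const_mul S
  refine hexp.mono' ?_ ?_
  · exact (measurable_const.mul ((by fun_prop : Measurable fun x : ℝ => (1 + S * x)⁻¹).mul
      (by fun_prop))).aestronglyMeasurable
  · filter_upwards [ae_restrict_mem measurableSet_Ioi] with x hx
    have hx0 : (0:ℝ) < x := hx
    have hpos : (0:ℝ) < 1 + S * x := by nlinarith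
    have hinv : (1 + S * x)⁻¹ ≤ 1 := by
      rw [inv_le_one_iff₀]; right; nlinarith
    have hinv0 : (0:ℝ) < (1 + S * x)⁻¹ := inv_pos.mpr hpos
    rw [Real.norm_eq_abs, abs_of_nonneg (by positivity), neg_one_mul]
    have h1 : (1 + S * x)⁻¹ * Real.exp (-x) ≤ Real.exp (-x) :=
      mul_le_of_le_one_left (Real.exp_pos _).le hinv
    exact mul_le_mul_of_nonneg_left h1 hS.le

lemma parts {S : ℝ} (hS : 0 < S) :
    ∫ x in Ioi (0:ℝ), Real.log (1 + S * x) * Real.exp (-x)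
      = ∫ x in Ioi (0:ℝ), S * ((1 + S * x)⁻¹ * Real.exp (-x)) := by
  set f : ℝ → ℝ := fun x => -(Real.exp (-x) * Real.log (1 + S * x)) with hf
  set f' : ℝ → ℝ := fun x =>
    Real.log (1 + S * x) * Real.exp (-x) - S * ((1 + S * x)⁻¹ * Real.exp (-x)) with hf'
  have hderiv : ∀ x ∈ Ici (0:ℝ), HasDerivAt f (f' x) x := by
    intro x hx
    have hx0 : (0:ℝ) ≤ x := hx
    have hpos : (0:ℝ) < 1 + S * x := by nlinarith
    have h1 : HasDerivAt (fun x : ℝ => Real.exp (-x)) (-Real.exp (-x)) x := by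
      exact ((Real.hasDerivAt_exp (-x)).comp x (hasDerivAt_neg x)).congr_deriv (by ring)
    have h2 : HasDerivAt (fun x : ℝ => Real.log (1 + S * x)) (S / (1 + S * x)) x := by
      have hlin : HasDerivAt (fun x : ℝ => 1 + S * x) S x := by
        simpa using ((hasDerivAt_id x).const_mul S).const_add 1
      simpa using hlin.log hpos.ne'
    have := (h1.mul h2).neg
    refine this.congr_deriv ?_
    show _ = Real.log (1 + S * x) * Real.exp (-x) - S * ((1 + S * x)⁻¹ * Real.exp (-x))
    field_simp
    ring
  have hcont : ContinuousWithinAt f (Ici (0:ℝ)) 0 := (hderiv 0 Set.self_mem_Ici).continuousAt.continuousWithinAt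
  have hint : IntegrableOn f' (Ioi (0:ℝ)) := (integrable_log_exp hS).sub (integrable_rat_exp hS)
  have htends : Tendsto f atTop (nhds 0) := by
    rw [show (0:ℝ) = -0 by norm_num]
    apply Tendsto.neg
    have hub : Tendsto (fun x : ℝ => S * (x ^ 1 * Real.exp (-x))) atTop (nhds 0) := by
      have := (tendsto_pow_mul_exp_neg_atTop_nhds_zero 1).const_mul S
      simpa using this
    apply tendsto_of_tendsto_of_tendsto_of_le_of_le' tendsto_const_nhds hub
    · filter_upwards [eventually_ge_atTop (0:ℝ)] with x hx
      have : (0:ℝ) ≤ Real.log (1 + S * x) := by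
        apply Real.log_nonneg; nlinarith
      positivity
    · filter_upwards [eventually_ge_atTop (0:ℝ)] with x hx
      have h2 : Real.log (1 + S * x) ≤ S * x := by
        have := Real.log_le_sub_one_of_pos (show (0:ℝ) < 1 + S * x by nlinarith)
        linarith
      have := Real.exp_pos (-x)
      rw [pow_one]
      nlinarith
  have key := integral_Ioi_of_hasDerivAt_of_tendsto hcont (fun x hx => hderiv x (Set.mem_Ici.mpr (le_of_lt hx)))
    hint htends
  have hf0 : f 0 = 0 := by simp [hf]
  rw [hf0, sub_zero] at key
  have hsplit : ∫ x in Ioi (0:ℝ), f' x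
      = (∫ x in Ioi (0:ℝ), Real.log (1 + S * x) * Real.exp (-x))
        - ∫ x in Ioi (0:ℝ), S * ((1 + S * x)⁻¹ * Real.exp (-x)) :=
    integral_sub (integrable_log_exp hS) (integrable_rat_exp hS)
  rw [key] at hsplit
  linarith [hsplit]

/-- For `SNR > 0`, the expectation `E[log₂(1 + SNR·|H|²)]` where `|H|²` is
exponentially distributed with mean 1 (density `e^{-x}` on `[0,∞)`) equals
`log₂(e) · e^{1/SNR} · E₁(1/SNR)`. -/
theorem rayleigh_capacity_closed_form (SNR : ℝ) (hSNR : 0 < SNR) :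
    ∫ x in Set.Ioi (0 : ℝ), Real.logb 2 (1 + SNR * x) * Real.exp (-x)
      = Real.logb 2 (Real.exp 1) * Real.exp (1 / SNR) * expInt (1 / SNR) := by
  set S := SNR with hSdef
  -- Step A: substitution in expInt
  have stepA : expInt (1 / S) = Real.exp (-(1/S)) * ∫ x in Ioi (0:ℝ),
      S * ((1 + S * x)⁻¹ * Real.exp (-x)) := by
    rw [expInt, shift_Ioi (fun t => t⁻¹ * Real.exp (-(1/S) * t))]
    have hc := integral_comp_mul_left_Ioi
      (fun u => (u + 1)⁻¹ * Real.exp (-(1/S) * (u + 1))) 0 hSNR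
    simp only [mul_zero, smul_eq_mul] at hc
    have hmain : ∫ x in Ioi (0:ℝ), (x + 1)⁻¹ * Real.exp (-(1/S) * (x + 1))
        = S * ∫ x in Ioi (0:ℝ), (S * x + 1)⁻¹ * Real.exp (-(1/S) * (S * x + 1)) := by
      rw [hc]; field_simp
    rw [hmain, ← integral_const_mul, ← integral_const_mul]
    apply setIntegral_congr_fun measurableSet_Ioi
    intro x hx
    have hx0 : (0:ℝ) < x := hx
    have : -(1/S) * (S * x + 1) = -x + (-(1/S)) := by field_simp; ring
    simp only [this, Real.exp_add]
    rw [show S * x + 1 = 1 + S * x by ring]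
    ring
  have hlogb : Real.logb 2 (Real.exp 1) * Real.exp (1/S) * expInt (1/S)
      = Real.logb 2 (Real.exp 1) * ∫ x in Ioi (0:ℝ), S * ((1 + S * x)⁻¹ * Real.exp (-x)) := by
    rw [stepA]
    have hexp1 : Real.exp (1/S) * Real.exp (-(1/S)) = 1 := by
      rw [← Real.exp_add]; simp
    rw [mul_assoc, ← mul_assoc (Real.exp (1/S)) (Real.exp (-(1/S))), hexp1, one_mul]
  rw [hlogb, ← parts hSNR, ← integral_const_mul]
  apply setIntegral_congr_fun measurableSet_Ioi
  intro x hx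
  have hx0 : (0:ℝ) < x := hx
  have hpos : (0:ℝ) < 1 + S * x := by nlinarith
  have : Real.logb 2 (1 + S * x) = Real.logb 2 (Real.exp 1) * Real.log (1 + S * x) := by
    simp [Real.logb, Real.log_exp]; ring
  dsimp only
  rw [this]; ring
end

section
/- For the Clarke–Jakes spectrum S_H(ν) = 1/(π√(f_D² − ν²)) on |ν| < f_D, assuming α·SNR < π·f_D, the quantity MMSE = 1 − ∫_{−f_D}^{f_D} SNR·S_H(ν)²/(1/α + SNR·S_H(ν)) dν equals 1 − arctanh(√(1 − (α·SNR/(π f_D))²)) / ((π/2)·√((π f_D/(α SNR))² − 1)). -/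
open MeasureTheory

/-- Inverse hyperbolic tangent. -/
noncomputable def arctanh (x : ℝ) : ℝ := (1 / 2) * Real.log ((1 + x) / (1 - x))

set_option maxHeartbeats 1000000 in
/-- Closed form of the MMSE for the Clarke–Jakes spectrum
`S_H(ν) = 1/(π √(f_D² − ν²))` on `|ν| < f_D`, assuming `α·SNR < π f_D`. -/
theorem mmse_clarke_jakes (fD α SNR : ℝ) (hf : 0 < fD) (hf2 : fD < 1 / 2)
    (hα : 0 < α) (hSNR : 0 < SNR) (hsmall : α * SNR < Real.pi * fD) :
    let S : ℝ → ℝ := fun ν => 1 / (Real.pi * Real.sqrt (fD ^ 2 - ν ^ 2))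
    1 - (∫ ν in Set.Ioo (-fD) fD, SNR * (S ν) ^ 2 / (1 / α + SNR * S ν))
      = 1 - arctanh (Real.sqrt (1 - (α * SNR / (Real.pi * fD)) ^ 2))
          / ((Real.pi / 2) * Real.sqrt ((Real.pi * fD / (α * SNR)) ^ 2 - 1)) := by
  intro S
  have hS : S = fun ν => 1 / (Real.pi * Real.sqrt (fD ^ 2 - ν ^ 2)) := rfl
  simp only [hS]
  have hπ : (0:ℝ) < Real.pi := Real.pi_pos
  set c := α * SNR with hcdef
  set a := Real.pi * fD with hadef
  have hc : 0 < c := mul_pos hα hSNR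
  have ha0 : 0 < a := mul_pos hπ hf
  have hac : c < a := hsmall
  set d := Real.sqrt (a ^ 2 - c ^ 2) with hddef
  have hd2 : d ^ 2 = a ^ 2 - c ^ 2 := Real.sq_sqrt (by nlinarith)
  have hd0 : 0 < d := Real.sqrt_pos.mpr (by nlinarith)
  have hdlta : d < a := by
    have h : d ^ 2 < a ^ 2 := by nlinarith
    exact lt_of_pow_lt_pow_left₀ 2 ha0.le h
  have hdlt : d < a + c := by linarith
  set w := fun ν : ℝ => Real.sqrt (fD ^ 2 - ν ^ 2) with hwdef
  have hw_nonneg : ∀ ν, 0 ≤ w ν := fun ν => Real.sqrt_nonneg _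
  set p := fun ν : ℝ => (fD + w ν) * (a + c) + ν * d with hpdef
  set q := fun ν : ℝ => (fD + w ν) * (a + c) - ν * d with hqdef
  set F := fun ν : ℝ => c / (Real.pi * d) * (Real.log (p ν) - Real.log (q ν)) with hFdef
  have hle : -fD ≤ fD := by linarith
  -- positivity of p and q on the closed interval
  have hppos : ∀ ν ∈ Set.Icc (-fD) fD, 0 < p ν := by
    intro ν hν
    have h1 : fD * (a + c) ≤ (fD + w ν) * (a + c) :=
      mul_le_mul_of_nonneg_right (by linarith [hw_nonneg ν]) (by linarith)
    have h2 : -(fD * d) ≤ ν * d := by nlinarith [hν.1]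
    have h3 : fD * d < fD * (a + c) := by nlinarith
    show 0 < (fD + w ν) * (a + c) + ν * d
    linarith
  have hqpos : ∀ ν ∈ Set.Icc (-fD) fD, 0 < q ν := by
    intro ν hν
    have h1 : fD * (a + c) ≤ (fD + w ν) * (a + c) :=
      mul_le_mul_of_nonneg_right (by linarith [hw_nonneg ν]) (by linarith)
    have h2 : ν * d ≤ fD * d := by nlinarith [hν.2]
    have h3 : fD * d < fD * (a + c) := by nlinarith
    show 0 < (fD + w ν) * (a + c) - ν * d
    linarith
  -- continuity of F
  have hwc : Continuous w := Real.continuous_sqrt.comp (continuous_const.sub (continuous_pow 2))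
  have hpc : Continuous p := ((continuous_const.add hwc).mul continuous_const).add
    (continuous_id.mul continuous_const)
  have hqc : Continuous q := ((continuous_const.add hwc).mul continuous_const).sub
    (continuous_id.mul continuous_const)
  have hFcont : ContinuousOn F (Set.Icc (-fD) fD) :=
    continuousOn_const.mul ((hpc.continuousOn.log fun x hx => (hppos x hx).ne').sub
      (hqc.continuousOn.log fun x hx => (hqpos x hx).ne'))
  -- derivative of F on the open interval
  have hderiv : ∀ x ∈ Set.Ioo (-fD) fD, HasDerivAt F
      (SNR * (1 / (Real.pi * w x)) ^ 2 / (1 / α + SNR * (1 / (Real.pi * w x)))) x := by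
    intro x hx
    have hx2 : x ^ 2 < fD ^ 2 := sq_lt_sq' hx.1 hx.2
    have hwx : 0 < w x := Real.sqrt_pos.mpr (by nlinarith)
    have hw2 : w x ^ 2 = fD ^ 2 - x ^ 2 := Real.sq_sqrt (by nlinarith)
    have hP0 : p x ≠ 0 := (hppos x ⟨hx.1.le, hx.2.le⟩).ne'
    have hQ0 : q x ≠ 0 := (hqpos x ⟨hx.1.le, hx.2.le⟩).ne'
    have hwd : HasDerivAt w (-x / w x) x := by
      have hinner : HasDerivAt (fun ν : ℝ => fD ^ 2 - ν ^ 2) (-(2 * x ^ 1)) x :=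
        (hasDerivAt_pow 2 x).const_sub (fD ^ 2)
      have h := (Real.hasDerivAt_sqrt (show fD ^ 2 - x ^ 2 ≠ 0 by nlinarith)).comp x hinner
      refine h.congr_deriv (Eq.symm ?_)
      show -x / Real.sqrt (fD ^ 2 - x ^ 2) = 1 / (2 * Real.sqrt (fD ^ 2 - x ^ 2)) * -(2 * x ^ 1)
      field_simp
    have hpd : HasDerivAt p (-x / w x * (a + c) + d) x := by
      have h := (((hasDerivAt_const x fD).add hwd).mul_const (a + c)).add
        ((hasDerivAt_id x).mul_const d)
      refine h.congr_deriv (Eq.symm ?_)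
      ring
    have hqd : HasDerivAt q (-x / w x * (a + c) - d) x := by
      have h := (((hasDerivAt_const x fD).add hwd).mul_const (a + c)).sub
        ((hasDerivAt_id x).mul_const d)
      refine h.congr_deriv (Eq.symm ?_)
      ring
    have hFd : HasDerivAt F (c / (Real.pi * d) *
        ((-x / w x * (a + c) + d) / p x - (-x / w x * (a + c) - d) / q x)) x :=
      ((hpd.log hP0).sub (hqd.log hQ0)).const_mul _
    convert hFd using 1
    -- algebraic identity
    rw [div_sub_div _ _ hP0 hQ0]
    have hnum : (-x / w x * (a + c) + d) * q x - p x * (-x / w x * (a + c) - d)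
        = 2 * d * (a + c) * fD * (w x + fD) / w x := by
      rw [eq_div_iff hwx.ne']
      show ((-x / w x * (a + c) + d) * ((fD + w x) * (a + c) - x * d)
          - ((fD + w x) * (a + c) + x * d) * (-x / w x * (a + c) - d)) * w x
          = 2 * d * (a + c) * fD * (w x + fD)
      field_simp
      linear_combination 2 * d * (a + c) * hw2
    have hden : p x * q x = 2 * (a + c) * (fD + w x) * fD * (Real.pi * w x + c) := by
      show ((fD + w x) * (a + c) + x * d) * ((fD + w x) * (a + c) - x * d)
          = 2 * (a + c) * (fD + w x) * fD * (Real.pi * w x + c)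
      linear_combination (-(x ^ 2)) * hd2 - (a ^ 2 - c ^ 2) * hw2
        + 2 * (a + c) * (fD + w x) * w x * hadef
    rw [hnum, hden]
    have hrhs : SNR * (1 / (Real.pi * w x)) ^ 2 / (1 / α + SNR * (1 / (Real.pi * w x)))
        = c / (Real.pi * w x * (Real.pi * w x + c)) := by
      rw [hcdef]
      have hpwc : 0 < Real.pi * w x + α * SNR := by positivity
      have hd1 : (0:ℝ) < 1 / α + SNR * (1 / (Real.pi * w x)) := by positivity
      field_simp
    rw [hrhs]
    have hpwc : (0:ℝ) < Real.pi * w x + c := by positivity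
    have hfw : (0:ℝ) < fD + w x := by positivity
    field_simp
    ring
  -- nonnegativity of the integrand
  have hnonneg : ∀ x ∈ Set.Ioo (-fD) fD,
      0 ≤ SNR * (1 / (Real.pi * w x)) ^ 2 / (1 / α + SNR * (1 / (Real.pi * w x))) := by
    intro x hx
    have hx2 : x ^ 2 < fD ^ 2 := sq_lt_sq' hx.1 hx.2
    have hwx : 0 < w x := Real.sqrt_pos.mpr (by nlinarith)
    positivity
  -- integrability
  have hint : IntegrableOn
      (fun ν => SNR * (1 / (Real.pi * w ν)) ^ 2 / (1 / α + SNR * (1 / (Real.pi * w ν))))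
      (Set.Ioc (-fD) fD) :=
    intervalIntegral.integrableOn_deriv_of_nonneg hFcont hderiv hnonneg
  have hii : IntervalIntegrable
      (fun ν => SNR * (1 / (Real.pi * w ν)) ^ 2 / (1 / α + SNR * (1 / (Real.pi * w ν))))
      volume (-fD) fD := (intervalIntegrable_iff_integrableOn_Ioc_of_le hle).mpr hint
  have heval : (∫ ν in Set.Ioo (-fD) fD,
      SNR * (1 / (Real.pi * w ν)) ^ 2 / (1 / α + SNR * (1 / (Real.pi * w ν))))
      = F fD - F (-fD) := by
    rw [← MeasureTheory.integral_Ioc_eq_integral_Ioo, ← intervalIntegral.integral_of_le hle]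
    exact intervalIntegral.integral_eq_sub_of_hasDerivAt_of_le hle hFcont hderiv hii
  rw [heval]
  -- endpoint values
  have hwfD : w fD = 0 := by
    show Real.sqrt (fD ^ 2 - fD ^ 2) = 0
    simp
  have hwnfD : w (-fD) = 0 := by
    show Real.sqrt (fD ^ 2 - (-fD) ^ 2) = 0
    simp
  have hFfD : F fD = c / (Real.pi * d) *
      (Real.log (fD * (a + c) + fD * d) - Real.log (fD * (a + c) - fD * d)) := by
    show c / (Real.pi * d) *
        (Real.log ((fD + w fD) * (a + c) + fD * d) - Real.log ((fD + w fD) * (a + c) - fD * d)) = _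
    rw [hwfD, add_zero]
  have hFnfD : F (-fD) = c / (Real.pi * d) *
      (Real.log (fD * (a + c) - fD * d) - Real.log (fD * (a + c) + fD * d)) := by
    show c / (Real.pi * d) * (Real.log ((fD + w (-fD)) * (a + c) + -fD * d)
        - Real.log ((fD + w (-fD)) * (a + c) - -fD * d)) = _
    rw [hwnfD, add_zero]
    ring_nf
  -- right-hand side simplification
  have hsq1 : Real.sqrt (1 - (c / a) ^ 2) = d / a := by
    rw [show 1 - (c / a) ^ 2 = (d / a) ^ 2 by rw [div_pow, div_pow, hd2]; field_simp]
    exact Real.sqrt_sq (by positivity)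
  have hsq2 : Real.sqrt ((a / c) ^ 2 - 1) = d / c := by
    rw [show (a / c) ^ 2 - 1 = (d / c) ^ 2 by rw [div_pow, div_pow, hd2]; field_simp]
    exact Real.sqrt_sq (by positivity)
  rw [hsq1, hsq2, hFfD, hFnfD]
  have hA : (0:ℝ) < fD * (a + c) + fD * d := by nlinarith
  have hB : (0:ℝ) < fD * (a + c) - fD * d := by nlinarith
  have hlog : Real.log (fD * (a + c) + fD * d) - Real.log (fD * (a + c) - fD * d)
      = 1 / 2 * Real.log ((a + d) / (a - d)) := by
    rw [← Real.log_div hA.ne' hB.ne']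
    have h4 : ((fD * (a + c) + fD * d) / (fD * (a + c) - fD * d)) ^ 2 = (a + d) / (a - d) := by
      rw [div_pow, div_eq_div_iff (pow_ne_zero 2 hB.ne') (by linarith : (0:ℝ) < a - d).ne']
      linear_combination (-(2 * d * fD ^ 2)) * hd2
    rw [← h4, Real.log_pow]
    push_cast
    ring
  rw [hlog]
  have h1da : (0:ℝ) < 1 - d / a := by
    rw [sub_pos, div_lt_one ha0]; exact hdlta
  have harct : arctanh (d / a) = 1 / 2 * Real.log ((a + d) / (a - d)) := by
    unfold arctanh
    rw [show (1 + d / a) / (1 - d / a) = (a + d) / (a - d) by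
      rw [div_eq_div_iff h1da.ne' (by linarith : (0:ℝ) < a - d).ne']
      field_simp]
  rw [harct]
  have hlog2 : Real.log (fD * (a + c) - fD * d) - Real.log (fD * (a + c) + fD * d)
      = -(1 / 2 * Real.log ((a + d) / (a - d))) := by rw [← hlog]; ring
  rw [hlog2]
  have key : c / (Real.pi * d) * (1 / 2 * Real.log ((a + d) / (a - d)))
      - c / (Real.pi * d) * -(1 / 2 * Real.log ((a + d) / (a - d)))
      = 1 / 2 * Real.log ((a + d) / (a - d)) / (Real.pi / 2 * (d / c)) := by
    generalize Real.log ((a + d) / (a - d)) = L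
    field_simp
    ring
  rw [key]
end
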